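/- Let d ≥ 2, let ψ ∈ ℂ^d be the GHZ-type unit vector with ψ_0 = ψ_{d−1} = 1/√2 and all other entries 0, let 0 ≤ η ≤ 1, and let ρ_η = (1−η)·ψψ† + (η/d)·I be the noisy GHZ state. Then C_{l2}(ρ_η) = (1−η)²/2, and consequently √(2·C_{l2}(ρ_η)) = C_{l1}(ρ_η); i.e., the spectrum-estimation lower bound √(2·C_{l2}) for the l1-norm of coherence is tight for noisy GHZ states. -/

import Mathlib

open Matrix BigOperators
open scoped ComplexOrder Classical

/-- The `l1`-norm of coherence: sum of moduli of off-diagonal entries. -/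
noncomputable def Cl1 {d : ℕ} (ρ : Matrix (Fin d) (Fin d) ℂ) : ℝ :=
  ∑ i, ∑ j, if i = j then 0 else ‖ρ i j‖

/-- The `l2`-norm of coherence: sum of squared moduli of off-diagonal entries. -/
noncomputable def Cl2 {d : ℕ} (ρ : Matrix (Fin d) (Fin d) ℂ) : ℝ :=
  ∑ i, ∑ j, if i = j then 0 else ‖ρ i j‖ ^ 2

/-- For the noisy GHZ state `ρ_η = (1−η)·ψψ† + (η/d)·I`, one has `C_{l2}(ρ_η) = (1−η)²/2`,
and consequently the spectrum-estimation lower bound `√(2·C_{l2})` for the `l1`-norm of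
coherence is tight: `√(2·C_{l2}(ρ_η)) = C_{l1}(ρ_η)`. -/
theorem noisy_ghz_Cl2_tight (d : ℕ) (hd : 2 ≤ d) (ψ : Fin d → ℂ)
    (h0 : ψ ⟨0, by omega⟩ = 1 / (Real.sqrt 2 : ℂ))
    (h1 : ψ ⟨d - 1, by omega⟩ = 1 / (Real.sqrt 2 : ℂ))
    (hz : ∀ i : Fin d, i ≠ ⟨0, by omega⟩ → i ≠ ⟨d - 1, by omega⟩ → ψ i = 0)
    (η : ℝ) (hη0 : 0 ≤ η) (hη1 : η ≤ 1) :
    Cl2 (((1 - η : ℝ) : ℂ) • Matrix.vecMulVec ψ (star ψ) +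
        ((η / d : ℝ) : ℂ) • (1 : Matrix (Fin d) (Fin d) ℂ)) = (1 - η) ^ 2 / 2 ∧
    Real.sqrt (2 * Cl2 (((1 - η : ℝ) : ℂ) • Matrix.vecMulVec ψ (star ψ) +
        ((η / d : ℝ) : ℂ) • (1 : Matrix (Fin d) (Fin d) ℂ))) =
      Cl1 (((1 - η : ℝ) : ℂ) • Matrix.vecMulVec ψ (star ψ) +
        ((η / d : ℝ) : ℂ) • (1 : Matrix (Fin d) (Fin d) ℂ)) := by
  have hd0 : 0 < d := by omega
  set a : Fin d := ⟨0, by omega⟩ with ha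
  set b : Fin d := ⟨d - 1, by omega⟩ with hb
  have hab : a ≠ b := by
    simp only [a, b, Fin.ext_iff, ne_eq]
    omega
  set ρ : Matrix (Fin d) (Fin d) ℂ :=
    ((1 - η : ℝ) : ℂ) • Matrix.vecMulVec ψ (star ψ) +
      ((η / d : ℝ) : ℂ) • (1 : Matrix (Fin d) (Fin d) ℂ) with hρdef
  have hρ : ∀ i j : Fin d, i ≠ j → ρ i j = ((1 - η : ℝ) : ℂ) * (ψ i * star (ψ j)) := by
    intro i j hij
    simp [hρdef, Matrix.add_apply, Matrix.smul_apply, Matrix.vecMulVec_apply,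
      Matrix.one_apply, hij]
  have hhalf : (1 / (Real.sqrt 2 : ℂ)) * star (1 / (Real.sqrt 2 : ℂ)) = (1 / 2 : ℂ) := by
    have h2 : ((Real.sqrt 2 : ℝ) : ℂ) * ((Real.sqrt 2 : ℝ) : ℂ) = 2 := by
      rw [← Complex.ofReal_mul, Real.mul_self_sqrt (by norm_num)]
      norm_num
    have hne : ((Real.sqrt 2 : ℝ) : ℂ) ≠ 0 := by
      intro h
      rw [h] at h2; norm_num at h2
    rw [star_div₀, star_one, Complex.star_def, Complex.conj_ofReal,
      div_mul_div_comm, one_mul, h2]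
  have habs : ∀ i j : Fin d, i ≠ j →
      ‖ρ i j‖ = if i = a ∧ j = b ∨ i = b ∧ j = a then (1 - η) / 2 else 0 := by
    intro i j hij
    rw [hρ i j hij]
    by_cases hc : i = a ∧ j = b ∨ i = b ∧ j = a
    · rcases hc with ⟨hi, hj⟩ | ⟨hi, hj⟩ <;> subst hi <;> subst hj <;>
        rw [if_pos (by tauto)] <;>
        · rw [h0, h1, hhalf, show ((1:ℂ)/2) = (((1:ℝ)/2 : ℝ):ℂ) by norm_num,
            ← Complex.ofReal_mul, Complex.norm_real, Real.norm_eq_abs, abs_of_nonneg (by linarith)]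
          ring
    · rw [if_neg hc]
      push_neg at hc
      obtain ⟨hc1, hc2⟩ := hc
      have hz' : ψ i = 0 ∨ ψ j = 0 := by
        by_cases hia : i = a
        · subst hia
          right
          exact hz j (fun h => hij h.symm) (hc1 rfl)
        · by_cases hib : i = b
          · subst hib
            right
            exact hz j (hc2 rfl) (fun h => hij h.symm)
          · left
            exact hz i hia hib
      rcases hz' with h | h <;> simp [h]
  -- reduce to pointwise
  have key1 : ∀ i j : Fin d,
      (if i = j then 0 else ‖ρ i j‖) =
        (if i = a ∧ j = b then (1 - η) / 2 else 0) +
        (if i = b ∧ j = a then (1 - η) / 2 else 0) := by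
    intro i j
    by_cases hij : i = j
    · subst hij
      rw [if_pos rfl, if_neg (by rintro ⟨u, v⟩; exact hab (u.symm.trans v)),
        if_neg (by rintro ⟨u, v⟩; exact hab (v.symm.trans u))]
      norm_num
    · rw [if_neg hij, habs i j hij]
      by_cases hc : i = a ∧ j = b
      · obtain ⟨hi, hj⟩ := hc
        subst hi; subst hj
        rw [if_pos (Or.inl ⟨rfl, rfl⟩), if_pos ⟨rfl, rfl⟩, if_neg (by tauto)]
        ring
      · by_cases hc2 : i = b ∧ j = a
        · obtain ⟨hi, hj⟩ := hc2
          subst hi; subst hj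
          rw [if_pos (Or.inr ⟨rfl, rfl⟩), if_neg (by tauto), if_pos ⟨rfl, rfl⟩]
          ring
        · rw [if_neg (by tauto), if_neg hc, if_neg hc2]
          ring
  have key2 : ∀ i j : Fin d,
      (if i = j then 0 else ‖ρ i j‖ ^ 2) =
        (if i = a ∧ j = b then ((1 - η) / 2) ^ 2 else 0) +
        (if i = b ∧ j = a then ((1 - η) / 2) ^ 2 else 0) := by
    intro i j
    by_cases hij : i = j
    · subst hij
      rw [if_pos rfl, if_neg (by rintro ⟨u, v⟩; exact hab (u.symm.trans v)),
        if_neg (by rintro ⟨u, v⟩; exact hab (v.symm.trans u))]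
      norm_num
    · rw [if_neg hij, habs i j hij]
      by_cases hc : i = a ∧ j = b
      · obtain ⟨hi, hj⟩ := hc
        subst hi; subst hj
        rw [if_pos (Or.inl ⟨rfl, rfl⟩), if_pos ⟨rfl, rfl⟩, if_neg (by tauto)]
        ring
      · by_cases hc2 : i = b ∧ j = a
        · obtain ⟨hi, hj⟩ := hc2
          subst hi; subst hj
          rw [if_pos (Or.inr ⟨rfl, rfl⟩), if_neg (by tauto), if_pos ⟨rfl, rfl⟩]
          ring
        · rw [if_neg (by tauto), if_neg hc, if_neg hc2]
          ring
  have hCl2 : Cl2 ρ = (1 - η) ^ 2 / 2 := by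
    unfold Cl2
    rw [Finset.sum_congr rfl (fun i _ => Finset.sum_congr rfl (fun j _ => key2 i j))]
    simp [Finset.sum_add_distrib, ite_and, Finset.sum_ite_eq, Finset.sum_ite_eq']
    try ring
  have hCl1 : Cl1 ρ = 1 - η := by
    unfold Cl1
    rw [Finset.sum_congr rfl (fun i _ => Finset.sum_congr rfl (fun j _ => key1 i j))]
    simp [Finset.sum_add_distrib, ite_and, Finset.sum_ite_eq, Finset.sum_ite_eq']
    try ring
  refine ⟨hCl2, ?_⟩
  rw [hCl2, hCl1]
  rw [show 2 * ((1 - η) ^ 2 / 2) = (1 - η) ^ 2 by ring, Real.sqrt_sq (by linarith)]
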